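/- arXiv:2211.09464 — 2 statements merged into one kernel-verified Lean document; each statement's English description precedes it below -/
import Mathlib

section
/- Let (ŷ₁,...,ŷₙ) be the minimizer of ∑ᵢ(xᵢ - yᵢ)² over the monotone cone C = {y ∈ ℝⁿ : y₁ ≤ ... ≤ yₙ}. Then the minimizer of the same sum over the bounded monotone cone C' = {y : a ≤ y₁ ≤ ... ≤ yₙ ≤ b} (with a ≤ b) is given coordinatewise by ỹᵢ = max(a, min(ŷᵢ, b)). -/
/-- Variational inequality for the isotonic regression: the residual is
non-positively correlated with `z - yhat` for every monotone `z`. -/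
lemma iso_vi (n : ℕ) (x yhat : Fin n → ℝ) (hmono : Monotone yhat)
    (hmin : ∀ y : Fin n → ℝ, Monotone y →
      ∑ i, (x i - yhat i)^2 ≤ ∑ i, (x i - y i)^2)
    (z : Fin n → ℝ) (hz : Monotone z) :
    ∑ i, (x i - yhat i) * (z i - yhat i) ≤ 0 := by
  set S := ∑ i, (x i - yhat i) * (z i - yhat i) with hS
  set Q := ∑ i, (z i - yhat i)^2 with hQ
  have hQ0 : 0 ≤ Q := Finset.sum_nonneg fun i _ => sq_nonneg _
  have key : ∀ t : ℝ, 0 ≤ t → t ≤ 1 → 2*t*S ≤ t^2*Q := by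
    intro t ht0 ht1
    have hw : Monotone (fun i => yhat i + t*(z i - yhat i)) := by
      intro i j hij
      have h1 := hmono hij
      have h2 := hz hij
      dsimp only
      nlinarith
    have h := hmin _ hw
    have hexp : ∑ i, (x i - (yhat i + t*(z i - yhat i)))^2
        = ∑ i, ((x i - yhat i)^2 - 2*t*((x i - yhat i) * (z i - yhat i))
            + t^2*(z i - yhat i)^2) := by
      apply Finset.sum_congr rfl
      intro i _
      ring
    rw [hexp] at h
    rw [Finset.sum_add_distrib, Finset.sum_sub_distrib, ← Finset.mul_sum,
      ← Finset.mul_sum] at h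
    rw [hS, hQ]
    linarith
  by_contra hcon
  push_neg at hcon
  have h1 := key 1 zero_le_one le_rfl
  have hQpos : 0 < Q := by nlinarith
  have h2 := key (S/Q) (by positivity) (by rw [div_le_one hQpos]; nlinarith)
  have : (S/Q) * Q = S := div_mul_cancel₀ _ (ne_of_gt hQpos)
  nlinarith [sq_nonneg S, mul_pos hcon hcon]

theorem stmt2 (n : ℕ) (x yhat : Fin n → ℝ) (a b : ℝ) (hab : a ≤ b)
    (hmono : Monotone yhat)
    (hmin : ∀ y : Fin n → ℝ, Monotone y →
      ∑ i, (x i - yhat i)^2 ≤ ∑ i, (x i - y i)^2) :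
    Monotone (fun i => max a (min (yhat i) b)) ∧
    (∀ i, a ≤ max a (min (yhat i) b) ∧ max a (min (yhat i) b) ≤ b) ∧
    (∀ y : Fin n → ℝ, Monotone y → (∀ i, a ≤ y i ∧ y i ≤ b) →
      ∑ i, (x i - max a (min (yhat i) b))^2 ≤ ∑ i, (x i - y i)^2) := by
  set yt : Fin n → ℝ := fun i => max a (min (yhat i) b) with hyt
  have hmonot : Monotone yt := fun i j hij =>
    max_le_max le_rfl (min_le_min (hmono hij) le_rfl)
  refine ⟨hmonot, fun i => ⟨le_max_left _ _, max_le hab (min_le_right _ _)⟩, ?_⟩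
  intro y hy hyb
  -- z = 2 * yhat - yt is monotone
  have hzmono : Monotone (fun i => 2 * yhat i - yt i) := by
    intro i j hij
    have h1 := hmono hij
    simp only [hyt]
    rcases le_total (yhat i) b with h2 | h2 <;> rcases le_total (yhat j) b with h3 | h3 <;>
      rcases le_total a (yhat i) with h4 | h4 <;> rcases le_total a (yhat j) with h5 | h5 <;>
      simp [max_def, min_def, hab, h2, h3, h4, h5] <;> linarith
  have hvi1 := iso_vi n x yhat hmono hmin _ hzmono
  have hvi2 := iso_vi n x yhat hmono hmin y hy
  -- rewrite hvi1 : ∑ (x-yhat)(yhat - yt) ≤ 0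
  have hvi1' : ∑ i, (x i - yhat i) * (yhat i - yt i) ≤ 0 := by
    have : ∑ i, (x i - yhat i) * ((2 * yhat i - yt i) - yhat i)
        = ∑ i, (x i - yhat i) * (yhat i - yt i) :=
      Finset.sum_congr rfl fun i _ => by ring
    linarith [this ▸ hvi1]
  -- pointwise: (yhat - yt)^2 ≤ (yhat - y)^2
  have hpt : ∑ i, (yhat i - yt i)^2 ≤ ∑ i, (yhat i - y i)^2 := by
    apply Finset.sum_le_sum
    intro i _
    obtain ⟨ha, hb⟩ := hyb i
    simp only [hyt]
    rcases le_total (yhat i) b with h2 | h2 <;> rcases le_total a (yhat i) with h3 | h3 <;>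
      simp [max_def, min_def, hab, h2, h3] <;> nlinarith
  -- expansion identity
  have hexp : ∑ i, (x i - y i)^2 - ∑ i, (x i - yt i)^2
      = -2 * (∑ i, (x i - yhat i) * (y i - yhat i))
        + (-2) * (∑ i, (x i - yhat i) * (yhat i - yt i))
        + (∑ i, (yhat i - y i)^2 - ∑ i, (yhat i - yt i)^2) := by
    rw [Finset.mul_sum, Finset.mul_sum, ← Finset.sum_sub_distrib, ← Finset.sum_sub_distrib,
      ← Finset.sum_add_distrib, ← Finset.sum_add_distrib]
    apply Finset.sum_congr rfl
    intro i _
    ring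
  have : (∑ i, (x i - yt i)^2) ≤ ∑ i, (x i - y i)^2 := by linarith
  simpa [hyt] using this
end

section
/- Suppose the density functions g_γ of the index γᵀX are uniformly bounded by q̄. Then for any monotone non-decreasing function φ : ℝ → [ε', 1-ε'], any ζ > 0, and r > 0 with supp(γᵀX) ⊆ [-r, r]: ∫ [φ(γᵀx + ζr) - φ(γᵀx - ζr)] dQ_X(x) ≤ 2 r q̄ (1 - 2ε') ζ. -/
open MeasureTheory

theorem stmt9 (d : ℕ) (Q : Measure (EuclideanSpace ℝ (Fin d)))
    [IsProbabilityMeasure Q]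
    (γ : EuclideanSpace ℝ (Fin d))
    (g : ℝ → ℝ) (qbar r ζ ε' : ℝ) (hr : 0 < r) (hζ : 0 < ζ)
    (hε : ε' ∈ Set.Ioo (0:ℝ) (1/2))
    (hg_nonneg : ∀ t, 0 ≤ g t) (hg_meas : Measurable g)
    (hg_bound : ∀ t, g t ≤ qbar)
    (hg_supp : ∀ t, t ∉ Set.Icc (-r) r → g t = 0)
    (hmap : Q.map (fun x => (inner ℝ γ x : ℝ)) =
      MeasureTheory.volume.withDensity (fun t => ENNReal.ofReal (g t)))
    (φ : ℝ → ℝ) (hφ : Monotone φ) (hφb : ∀ u, φ u ∈ Set.Icc ε' (1 - ε')) :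
    ∫ x, (φ ((inner ℝ γ x : ℝ) + ζ * r) - φ ((inner ℝ γ x : ℝ) - ζ * r)) ∂Q
      ≤ 2 * r * qbar * (1 - 2 * ε') * ζ := by
  have ha0 : 0 < ζ * r := mul_pos hζ hr
  set a : ℝ := ζ * r with ha
  have hφm : Measurable φ := hφ.measurable
  set f : ℝ → ℝ := fun t => φ (t + a) - φ (t - a) with hfdef
  have hfmeas : Measurable f :=
    (hφm.comp (measurable_add_const a)).sub (hφm.comp (measurable_sub_const a))
  have hf0 : ∀ t, 0 ≤ f t := fun t => sub_nonneg.2 (hφ (by linarith))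
  have hfub : ∀ t, f t ≤ 1 - 2 * ε' := by
    intro t
    have h1 := (hφb (t + a)).2
    have h2 := (hφb (t - a)).1
    simp only [hfdef]
    linarith
  have hinner : Measurable fun x : EuclideanSpace ℝ (Fin d) => (inner ℝ γ x : ℝ) :=
    (continuous_const.inner continuous_id).measurable
  have qbar0 : 0 ≤ qbar := le_trans (hg_nonneg 0) (hg_bound 0)
  have step1 : ∫ x, (φ ((inner ℝ γ x : ℝ) + a) - φ ((inner ℝ γ x : ℝ) - a)) ∂Q
      = ∫ t, f t ∂(Q.map (fun x => (inner ℝ γ x : ℝ))) :=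
    (integral_map hinner.aemeasurable hfmeas.aestronglyMeasurable).symm
  rw [step1, hmap]
  have step2 : ∫ t, f t ∂(volume.withDensity fun t => ENNReal.ofReal (g t))
      = ∫ t, g t * f t := by
    rw [show (fun t => ENNReal.ofReal (g t)) = fun t => ((g t).toNNReal : ENNReal) from rfl,
      integral_withDensity_eq_integral_smul (hg_meas.real_toNNReal) f]
    congr 1
    ext t
    simp [NNReal.smul_def, Real.coe_toNNReal _ (hg_nonneg t)]
  rw [step2]
  -- integrability of the dominating function on Icc
  have hIndInt : IntegrableOn (fun t => qbar * f t) (Set.Icc (-r) r) volume := by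
    apply Measure.integrableOn_of_bounded (M := qbar * (1 - 2 * ε'))
    · exact (measure_Icc_lt_top).ne
    · exact (hfmeas.const_mul qbar).aestronglyMeasurable
    · filter_upwards with t
      rw [Real.norm_eq_abs, abs_of_nonneg (mul_nonneg qbar0 (hf0 t))]
      exact mul_le_mul_of_nonneg_left (hfub t) qbar0
  have step3 : ∫ t, g t * f t ≤ ∫ t in Set.Icc (-r) r, qbar * f t := by
    rw [← integral_indicator measurableSet_Icc]
    apply integral_mono_of_nonneg
    · filter_upwards with t using mul_nonneg (hg_nonneg t) (hf0 t)
    · exact (integrable_indicator_iff measurableSet_Icc).2 hIndInt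
    · filter_upwards with t
      by_cases ht : t ∈ Set.Icc (-r) r
      · rw [Set.indicator_of_mem ht]
        exact mul_le_mul_of_nonneg_right (hg_bound t) (hf0 t)
      · rw [Set.indicator_of_notMem ht, hg_supp t ht, zero_mul]
  have hint : ∀ b1 b2 : ℝ, IntervalIntegrable φ volume b1 b2 :=
    fun b1 b2 => (hφ.monotoneOn _).intervalIntegrable
  have hm1 : Monotone fun t : ℝ => φ (t + a) := fun x y h => hφ (by linarith)
  have hm2 : Monotone fun t : ℝ => φ (t - a) := fun x y h => hφ (by linarith)
  have int1 : IntervalIntegrable (fun t => φ (t + a)) volume (-r) r :=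
    (hm1.monotoneOn _).intervalIntegrable
  have int2 : IntervalIntegrable (fun t => φ (t - a)) volume (-r) r :=
    (hm2.monotoneOn _).intervalIntegrable
  have step4 : ∫ t in Set.Icc (-r) r, qbar * f t = qbar * ∫ t in (-r)..r, f t := by
    rw [integral_Icc_eq_integral_Ioc, ← intervalIntegral.integral_of_le (by linarith),
      ← intervalIntegral.integral_const_mul]
  have key : ∫ t in (-r)..r, f t ≤ 2 * a * (1 - 2 * ε') := by
    have h1 : ∫ t in (-r)..r, f t
        = (∫ t in (-r + a)..(r + a), φ t) - ∫ t in (-r - a)..(r - a), φ t := by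
      simp only [hfdef]
      rw [intervalIntegral.integral_sub int1 int2,
        intervalIntegral.integral_comp_add_right φ a,
        intervalIntegral.integral_comp_sub_right φ a]
    have split1 : ∫ t in (-r + a)..(r + a), φ t
        = (∫ t in (-r + a)..(r - a), φ t) + ∫ t in (r - a)..(r + a), φ t :=
      (intervalIntegral.integral_add_adjacent_intervals (hint _ _) (hint _ _)).symm
    have split2 : ∫ t in (-r - a)..(r - a), φ t
        = (∫ t in (-r - a)..(-r + a), φ t) + ∫ t in (-r + a)..(r - a), φ t :=
      (intervalIntegral.integral_add_adjacent_intervals (hint _ _) (hint _ _)).symm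
    have b1 : ∫ t in (r - a)..(r + a), φ t ≤ (2 * a) * (1 - ε') := by
      calc ∫ t in (r - a)..(r + a), φ t
          ≤ ∫ _t in (r - a)..(r + a), (1 - ε') :=
            intervalIntegral.integral_mono_on (by linarith) (hint _ _)
              intervalIntegrable_const (fun x _ => (hφb x).2)
        _ = (2 * a) * (1 - ε') := by
            rw [intervalIntegral.integral_const, smul_eq_mul]; ring
    have b2 : (2 * a) * ε' ≤ ∫ t in (-r - a)..(-r + a), φ t := by
      calc (2 * a) * ε' = ((-r + a) - (-r - a)) • ε' := by rw [smul_eq_mul]; ring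
        _ = ∫ _t in (-r - a)..(-r + a), ε' := (intervalIntegral.integral_const ε').symm
        _ ≤ ∫ t in (-r - a)..(-r + a), φ t :=
            intervalIntegral.integral_mono_on (by linarith) intervalIntegrable_const
              (hint _ _) (fun x _ => (hφb x).1)
    linarith
  calc ∫ t, g t * f t ≤ qbar * ∫ t in (-r)..r, f t := step3.trans_eq step4
    _ ≤ qbar * (2 * a * (1 - 2 * ε')) := mul_le_mul_of_nonneg_left key qbar0
    _ = 2 * r * qbar * (1 - 2 * ε') * ζ := by rw [ha]; ring
end
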